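/- A finite simple graph G is good if and only if G contains no induced subgraph isomorphic to any of the following five graphs: the gem; the graph obtained from C4 + K1 (a 4-cycle plus one isolated vertex) by adding a universal vertex; the graph obtained from the butterfly by adding a universal vertex; the graph obtained from 3K2 by adding a universal vertex; and the graph obtained from the octahedron by adding a universal vertex. -/

import Mathlib

/-- `G` is a threshold graph: every nonempty induced subgraph (given by a nonempty vertex
subset `W`) has a vertex that is isolated in it or universal in it. -/
def IsThreshold {V : Type*} (G : SimpleGraph V) : Prop :=
  ∀ W : Set V, W.Nonempty → ∃ x ∈ W,
    (∀ y ∈ W, ¬ G.Adj x y) ∨ (∀ y ∈ W, y ≠ x → G.Adj x y)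

/-- `H` is the union of two threshold graphs: its vertex set is partitioned into two
nonempty parts with no edges between them, each inducing a threshold graph. -/
def IsUnionTwoThreshold {W : Type*} (H : SimpleGraph W) : Prop :=
  ∃ A B : Set W, A.Nonempty ∧ B.Nonempty ∧ A ∪ B = Set.univ ∧ Disjoint A B ∧
    (∀ a ∈ A, ∀ b ∈ B, ¬ H.Adj a b) ∧
    IsThreshold (H.induce A) ∧ IsThreshold (H.induce B)

/-- `H` is the join of two threshold graphs: its vertex set is partitioned into two
nonempty parts with all edges between them, each inducing a threshold graph. -/
def IsJoinTwoThreshold {W : Type*} (H : SimpleGraph W) : Prop :=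
  ∃ A B : Set W, A.Nonempty ∧ B.Nonempty ∧ A ∪ B = Set.univ ∧ Disjoint A B ∧
    (∀ a ∈ A, ∀ b ∈ B, H.Adj a b) ∧
    IsThreshold (H.induce A) ∧ IsThreshold (H.induce B)

/-- A vertex `x` of `G` is good if its neighborhood is empty, or induces a threshold
graph, or the union of two threshold graphs, or the join of two threshold graphs. -/
def GoodVertex {V : Type*} (G : SimpleGraph V) (x : V) : Prop :=
  G.neighborSet x = ∅ ∨
  IsThreshold (G.induce (G.neighborSet x)) ∨
  IsUnionTwoThreshold (G.induce (G.neighborSet x)) ∨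
  IsJoinTwoThreshold (G.induce (G.neighborSet x))

/-- `G` is good if every vertex of `G` is good. -/
def Good {V : Type*} (G : SimpleGraph V) : Prop := ∀ x : V, GoodVertex G x

/-- The simple graph on `Fin n` with the given list of edges. -/
def graphOfEdges (n : ℕ) (E : List (Fin n × Fin n)) : SimpleGraph (Fin n) :=
  SimpleGraph.fromRel (fun a b => (a, b) ∈ E)

/-- The gem: a path `0-1-2-3` together with a vertex `4` adjacent to all path vertices. -/
def gem : SimpleGraph (Fin 5) :=
  graphOfEdges 5 [(0, 1), (1, 2), (2, 3), (4, 0), (4, 1), (4, 2), (4, 3)]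

/-- `C₄ + K₁` (a 4-cycle `0,1,2,3` plus the isolated vertex `4`) together with a universal
vertex `5`. -/
def c4K1Universal : SimpleGraph (Fin 6) :=
  graphOfEdges 6 [(0, 1), (1, 2), (2, 3), (3, 0), (5, 0), (5, 1), (5, 2), (5, 3), (5, 4)]

/-- The butterfly (two triangles `0,1,2` and `2,3,4` sharing the vertex `2`; the complement
of `C₄ + K₁`, i.e. its local complement at the universal vertex) together with a universal
vertex `5`. -/
def butterflyUniversal : SimpleGraph (Fin 6) :=
  graphOfEdges 6 [(0, 1), (0, 2), (1, 2), (2, 3), (2, 4), (3, 4),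
    (5, 0), (5, 1), (5, 2), (5, 3), (5, 4)]

/-- `3K₂` (three disjoint edges) together with a universal vertex `6`. -/
def threeK2Universal : SimpleGraph (Fin 7) :=
  graphOfEdges 7 [(0, 1), (2, 3), (4, 5), (6, 0), (6, 1), (6, 2), (6, 3), (6, 4), (6, 5)]

/-- The octahedron `K_{2,2,2}` (the complement of `3K₂`, parts `{0,1}`, `{2,3}`, `{4,5}`)
together with a universal vertex `6`. -/
def octahedronUniversal : SimpleGraph (Fin 7) :=
  graphOfEdges 7 [(0, 2), (0, 3), (0, 4), (0, 5), (1, 2), (1, 3), (1, 4), (1, 5),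
    (2, 4), (2, 5), (3, 4), (3, 5), (6, 0), (6, 1), (6, 2), (6, 3), (6, 4), (6, 5)]

/- ===================== Auxiliary development ===================== -/

section Configs

open SimpleGraph

variable {V : Type*} {W : Type*}

/-- An induced path on four vertices. -/
def p4At (G : SimpleGraph V) (a b c d : V) : Prop :=
  G.Adj a b ∧ G.Adj b c ∧ G.Adj c d ∧
  ¬G.Adj a c ∧ ¬G.Adj a d ∧ ¬G.Adj b d ∧ a ≠ c ∧ a ≠ d ∧ b ≠ d

/-- An induced pair of disjoint edges. -/
def k2At (G : SimpleGraph V) (a b c d : V) : Prop :=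
  G.Adj a b ∧ G.Adj c d ∧
  ¬G.Adj a c ∧ ¬G.Adj a d ∧ ¬G.Adj b c ∧ ¬G.Adj b d ∧
  a ≠ c ∧ a ≠ d ∧ b ≠ c ∧ b ≠ d

/-- An induced four-cycle. -/
def c4At (G : SimpleGraph V) (a b c d : V) : Prop :=
  G.Adj a b ∧ G.Adj b c ∧ G.Adj c d ∧ G.Adj d a ∧
  ¬G.Adj a c ∧ ¬G.Adj b d ∧ a ≠ c ∧ b ≠ d

/-- An induced four-cycle plus an isolated vertex. -/
def c4k1At (G : SimpleGraph V) (a b c d e : V) : Prop :=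
  c4At G a b c d ∧ ¬G.Adj a e ∧ ¬G.Adj b e ∧ ¬G.Adj c e ∧ ¬G.Adj d e ∧
  a ≠ e ∧ b ≠ e ∧ c ≠ e ∧ d ≠ e

/-- An induced butterfly with center `v`. -/
def btfAt (G : SimpleGraph V) (a b v c d : V) : Prop :=
  G.Adj a b ∧ G.Adj a v ∧ G.Adj b v ∧ G.Adj v c ∧ G.Adj v d ∧ G.Adj c d ∧
  ¬G.Adj a c ∧ ¬G.Adj a d ∧ ¬G.Adj b c ∧ ¬G.Adj b d ∧
  a ≠ c ∧ a ≠ d ∧ b ≠ c ∧ b ≠ d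

/-- An induced triple of disjoint edges. -/
def k32At (G : SimpleGraph V) (a b c d e f : V) : Prop :=
  k2At G a b c d ∧ k2At G a b e f ∧ k2At G c d e f

/-- An induced octahedron. -/
def octAt (G : SimpleGraph V) (a b c d e f : V) : Prop :=
  ¬G.Adj a b ∧ ¬G.Adj c d ∧ ¬G.Adj e f ∧ a ≠ b ∧ c ≠ d ∧ e ≠ f ∧
  G.Adj a c ∧ G.Adj a d ∧ G.Adj b c ∧ G.Adj b d ∧
  G.Adj a e ∧ G.Adj a f ∧ G.Adj b e ∧ G.Adj b f ∧
  G.Adj c e ∧ G.Adj c f ∧ G.Adj d e ∧ G.Adj d f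

def HasP4 (G : SimpleGraph V) : Prop := ∃ a b c d, p4At G a b c d
def HasK2K2 (G : SimpleGraph V) : Prop := ∃ a b c d, k2At G a b c d
def HasC4 (G : SimpleGraph V) : Prop := ∃ a b c d, c4At G a b c d
def HasC4K1 (G : SimpleGraph V) : Prop := ∃ a b c d e, c4k1At G a b c d e
def HasBtf (G : SimpleGraph V) : Prop := ∃ a b v c d, btfAt G a b v c d
def Has3K2 (G : SimpleGraph V) : Prop := ∃ a b c d e f, k32At G a b c d e f
def HasOct (G : SimpleGraph V) : Prop := ∃ a b c d e f, octAt G a b c d e f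

variable {G : SimpleGraph V}

/- ------------ complement translations ------------ -/

lemma compl_adj_of {a b : V} (h1 : a ≠ b) (h2 : ¬G.Adj a b) : Gᶜ.Adj a b :=
  (G.compl_adj a b).mpr ⟨h1, h2⟩

lemma not_compl_adj_of {a b : V} (h : G.Adj a b) : ¬Gᶜ.Adj a b :=
  fun h' => ((G.compl_adj a b).mp h').2 h

lemma p4At_compl {a b c d : V} (h : p4At G a b c d) : p4At Gᶜ c a d b := by
  obtain ⟨hab, hbc, hcd, hac, had, hbd, nac, nad, nbd⟩ := h
  exact ⟨compl_adj_of nac.symm (fun h' => hac h'.symm), compl_adj_of nad had,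
    compl_adj_of nbd.symm (fun h' => hbd h'.symm), not_compl_adj_of hcd, not_compl_adj_of hbc.symm,
    not_compl_adj_of hab, hcd.ne, hbc.ne', hab.ne⟩

lemma c4At_compl {a b c d : V} (h : c4At G a b c d) : k2At Gᶜ a c b d := by
  obtain ⟨hab, hbc, hcd, hda, hac, hbd, nac, nbd⟩ := h
  exact ⟨compl_adj_of nac hac, compl_adj_of nbd hbd,
    not_compl_adj_of hab, not_compl_adj_of hda.symm,
    not_compl_adj_of hbc.symm, not_compl_adj_of hcd,
    hab.ne, hda.ne', hbc.ne', hcd.ne⟩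

lemma k2At_compl {a b c d : V} (h : k2At G a b c d) : c4At Gᶜ a c b d := by
  obtain ⟨hab, hcd, hac, had, hbc, hbd, nac, nad, nbc, nbd⟩ := h
  exact ⟨compl_adj_of nac hac, compl_adj_of nbc.symm (fun h' => hbc h'.symm),
    compl_adj_of nbd hbd, compl_adj_of nad.symm (fun h' => had h'.symm),
    not_compl_adj_of hab, not_compl_adj_of hcd, hab.ne, hcd.ne⟩

lemma c4k1At_compl {a b c d e : V} (h : c4k1At G a b c d e) : btfAt Gᶜ a c e b d := by
  obtain ⟨⟨hab, hbc, hcd, hda, hac, hbd, nac, nbd⟩, hae, hbe, hce, hde, nae, nbe, nce, nde⟩ := h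
  exact ⟨compl_adj_of nac hac, compl_adj_of nae hae, compl_adj_of nce hce,
    compl_adj_of nbe.symm (fun h' => hbe h'.symm), compl_adj_of nde.symm (fun h' => hde h'.symm),
    compl_adj_of nbd hbd,
    not_compl_adj_of hab, not_compl_adj_of hda.symm, not_compl_adj_of hbc.symm,
    not_compl_adj_of hcd, hab.ne, hda.ne', hbc.ne', hcd.ne⟩

lemma btfAt_compl {a b v c d : V} (h : btfAt G a b v c d) : c4k1At Gᶜ a c b d v := by
  obtain ⟨hab, hav, hbv, hvc, hvd, hcd, hac, had, hbc, hbd, nac, nad, nbc, nbd⟩ := h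
  exact ⟨⟨compl_adj_of nac hac, compl_adj_of nbc.symm (fun h' => hbc h'.symm),
      compl_adj_of nbd hbd, compl_adj_of nad.symm (fun h' => had h'.symm),
      not_compl_adj_of hab, not_compl_adj_of hcd, hab.ne, hcd.ne⟩,
    not_compl_adj_of hav, not_compl_adj_of hvc.symm, not_compl_adj_of hbv,
    not_compl_adj_of hvd.symm, hav.ne, hvc.ne', hbv.ne, hvd.ne'⟩

lemma k32At_compl {a b c d e f : V} (h : k32At G a b c d e f) : octAt Gᶜ a b c d e f := by
  obtain ⟨⟨hab, hcd, hac, had, hbc, hbd, nac, nad, nbc, nbd⟩,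
    ⟨_, hef, hae, haf, hbe, hbf, nae, naf, nbe, nbf⟩,
    ⟨_, _, hce, hcf, hde, hdf, nce, ncf, nde, ndf⟩⟩ := h
  exact ⟨not_compl_adj_of hab, not_compl_adj_of hcd, not_compl_adj_of hef,
    hab.ne, hcd.ne, hef.ne,
    compl_adj_of nac hac, compl_adj_of nad had, compl_adj_of nbc hbc, compl_adj_of nbd hbd,
    compl_adj_of nae hae, compl_adj_of naf haf, compl_adj_of nbe hbe, compl_adj_of nbf hbf,
    compl_adj_of nce hce, compl_adj_of ncf hcf, compl_adj_of nde hde, compl_adj_of ndf hdf⟩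

lemma octAt_compl {a b c d e f : V} (h : octAt G a b c d e f) : k32At Gᶜ a b c d e f := by
  obtain ⟨nab, ncd, nef, dab, dcd, def', hac, had, hbc, hbd, hae, haf, hbe, hbf,
    hce, hcf, hde, hdf⟩ := h
  exact ⟨⟨compl_adj_of dab nab, compl_adj_of dcd ncd,
      not_compl_adj_of hac, not_compl_adj_of had, not_compl_adj_of hbc, not_compl_adj_of hbd,
      hac.ne, had.ne, hbc.ne, hbd.ne⟩,
    ⟨compl_adj_of dab nab, compl_adj_of def' nef,
      not_compl_adj_of hae, not_compl_adj_of haf, not_compl_adj_of hbe, not_compl_adj_of hbf,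
      hae.ne, haf.ne, hbe.ne, hbf.ne⟩,
    ⟨compl_adj_of dcd ncd, compl_adj_of def' nef,
      not_compl_adj_of hce, not_compl_adj_of hcf, not_compl_adj_of hde, not_compl_adj_of hdf,
      hce.ne, hcf.ne, hde.ne, hdf.ne⟩⟩

end Configs

section Threshold

open SimpleGraph

variable {V : Type*} {W : Type*} {G : SimpleGraph V}

lemma not_threshold_p4 {a b c d : V} (h : p4At G a b c d) : ¬IsThreshold G := by
  intro ht
  obtain ⟨hab, hbc, hcd, hac, had, hbd, nac, nad, nbd⟩ := h
  obtain ⟨x, hx, hcase⟩ := ht {a, b, c, d} ⟨a, by simp⟩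
  simp only [Set.mem_insert_iff, Set.mem_singleton_iff] at hx
  rcases hx with rfl | rfl | rfl | rfl <;> rcases hcase with hiso | huniv
  · exact hiso b (by simp) hab
  · exact hac (huniv c (by simp) nac.symm)
  · exact hiso c (by simp) hbc
  · exact hbd (huniv d (by simp) nbd.symm)
  · exact hiso b (by simp) hbc.symm
  · exact hac ((huniv a (by simp) nac).symm)
  · exact hiso c (by simp) hcd.symm
  · exact had ((huniv a (by simp) nad).symm)

lemma not_threshold_c4 {a b c d : V} (h : c4At G a b c d) : ¬IsThreshold G := by
  intro ht
  obtain ⟨hab, hbc, hcd, hda, hac, hbd, nac, nbd⟩ := h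
  obtain ⟨x, hx, hcase⟩ := ht {a, b, c, d} ⟨a, by simp⟩
  simp only [Set.mem_insert_iff, Set.mem_singleton_iff] at hx
  rcases hx with rfl | rfl | rfl | rfl <;> rcases hcase with hiso | huniv
  · exact hiso b (by simp) hab
  · exact hac (huniv c (by simp) nac.symm)
  · exact hiso c (by simp) hbc
  · exact hbd (huniv d (by simp) nbd.symm)
  · exact hiso d (by simp) hcd
  · exact hac ((huniv a (by simp) nac).symm)
  · exact hiso a (by simp) hda
  · exact hbd ((huniv b (by simp) nbd).symm)

lemma not_threshold_k2 {a b c d : V} (h : k2At G a b c d) : ¬IsThreshold G := by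
  intro ht
  obtain ⟨hab, hcd, hac, had, hbc, hbd, nac, nad, nbc, nbd⟩ := h
  obtain ⟨x, hx, hcase⟩ := ht {a, b, c, d} ⟨a, by simp⟩
  simp only [Set.mem_insert_iff, Set.mem_singleton_iff] at hx
  rcases hx with rfl | rfl | rfl | rfl <;> rcases hcase with hiso | huniv
  · exact hiso b (by simp) hab
  · exact hac (huniv c (by simp) nac.symm)
  · exact hiso a (by simp) hab.symm
  · exact hbc (huniv c (by simp) nbc.symm)
  · exact hiso d (by simp) hcd
  · exact hac ((huniv a (by simp) nac).symm)
  · exact hiso c (by simp) hcd.symm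
  · exact had ((huniv a (by simp) nad).symm)

lemma IsThreshold.compl (h : IsThreshold G) : IsThreshold Gᶜ := by
  intro W hW
  obtain ⟨x, hx, hc⟩ := h W hW
  refine ⟨x, hx, ?_⟩
  rcases hc with hiso | huniv
  · right
    intro y hy hyx
    exact (G.compl_adj x y).mpr ⟨fun he => hyx he.symm, hiso y hy⟩
  · left
    intro y hy hadj
    obtain ⟨hne, hnadj⟩ := (G.compl_adj x y).mp hadj
    exact hnadj (huniv y hy (fun he => hne he.symm))

lemma isThreshold_compl_iff : IsThreshold Gᶜ ↔ IsThreshold G :=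
  ⟨fun h => by have := h.compl; rwa [compl_compl] at this, IsThreshold.compl⟩

lemma induce_compl_eq (G : SimpleGraph V) (s : Set V) : Gᶜ.induce s = (G.induce s)ᶜ := by
  ext a b
  simp only [comap_adj, Function.Embedding.coe_subtype, compl_adj, ne_eq, Subtype.coe_ne_coe]

lemma isJoin_iff_isUnion_compl (K : SimpleGraph W) :
    IsJoinTwoThreshold K ↔ IsUnionTwoThreshold Kᶜ := by
  constructor
  · rintro ⟨A, B, hA, hB, hcov, hdisj, hcross, tA, tB⟩
    refine ⟨A, B, hA, hB, hcov, hdisj, ?_, ?_, ?_⟩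
    · exact fun a ha b hb h => ((K.compl_adj a b).mp h).2 (hcross a ha b hb)
    · rw [induce_compl_eq, isThreshold_compl_iff]; exact tA
    · rw [induce_compl_eq, isThreshold_compl_iff]; exact tB
  · rintro ⟨A, B, hA, hB, hcov, hdisj, hcross, tA, tB⟩
    refine ⟨A, B, hA, hB, hcov, hdisj, ?_, ?_, ?_⟩
    · intro a ha b hb
      by_contra hnadj
      have hne : a ≠ b := fun h => Set.disjoint_left.mp hdisj ha (by rwa [h])
      exact hcross a ha b hb ((K.compl_adj a b).mpr ⟨hne, hnadj⟩)
    · rw [← isThreshold_compl_iff, ← induce_compl_eq]; exact tA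
    · rw [← isThreshold_compl_iff, ← induce_compl_eq]; exact tB

/- ------------ transfers between a graph and its induced subgraphs ------------ -/

variable {s : Set V}

lemma p4At_val {a b c d : ↥s} (h : p4At (G.induce s) a b c d) :
    p4At G a.1 b.1 c.1 d.1 := by
  obtain ⟨h1, h2, h3, h4, h5, h6, n1, n2, n3⟩ := h
  exact ⟨h1, h2, h3, h4, h5, h6, Subtype.coe_ne_coe.mpr n1,
    Subtype.coe_ne_coe.mpr n2, Subtype.coe_ne_coe.mpr n3⟩

lemma k2At_val {a b c d : ↥s} (h : k2At (G.induce s) a b c d) :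
    k2At G a.1 b.1 c.1 d.1 := by
  obtain ⟨h1, h2, h3, h4, h5, h6, n1, n2, n3, n4⟩ := h
  exact ⟨h1, h2, h3, h4, h5, h6, Subtype.coe_ne_coe.mpr n1, Subtype.coe_ne_coe.mpr n2,
    Subtype.coe_ne_coe.mpr n3, Subtype.coe_ne_coe.mpr n4⟩

lemma c4At_val {a b c d : ↥s} (h : c4At (G.induce s) a b c d) :
    c4At G a.1 b.1 c.1 d.1 := by
  obtain ⟨h1, h2, h3, h4, h5, h6, n1, n2⟩ := h
  exact ⟨h1, h2, h3, h4, h5, h6, Subtype.coe_ne_coe.mpr n1, Subtype.coe_ne_coe.mpr n2⟩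

lemma c4k1At_val {a b c d e : ↥s} (h : c4k1At (G.induce s) a b c d e) :
    c4k1At G a.1 b.1 c.1 d.1 e.1 := by
  obtain ⟨h0, h1, h2, h3, h4, n1, n2, n3, n4⟩ := h
  exact ⟨c4At_val h0, h1, h2, h3, h4, Subtype.coe_ne_coe.mpr n1, Subtype.coe_ne_coe.mpr n2,
    Subtype.coe_ne_coe.mpr n3, Subtype.coe_ne_coe.mpr n4⟩

lemma btfAt_val {a b v c d : ↥s} (h : btfAt (G.induce s) a b v c d) :
    btfAt G a.1 b.1 v.1 c.1 d.1 := by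
  obtain ⟨h1, h2, h3, h4, h5, h6, h7, h8, h9, h10, n1, n2, n3, n4⟩ := h
  exact ⟨h1, h2, h3, h4, h5, h6, h7, h8, h9, h10, Subtype.coe_ne_coe.mpr n1,
    Subtype.coe_ne_coe.mpr n2, Subtype.coe_ne_coe.mpr n3, Subtype.coe_ne_coe.mpr n4⟩

lemma k32At_val {a b c d e f : ↥s} (h : k32At (G.induce s) a b c d e f) :
    k32At G a.1 b.1 c.1 d.1 e.1 f.1 :=
  ⟨k2At_val h.1, k2At_val h.2.1, k2At_val h.2.2⟩

lemma octAt_val {a b c d e f : ↥s} (h : octAt (G.induce s) a b c d e f) :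
    octAt G a.1 b.1 c.1 d.1 e.1 f.1 := by
  obtain ⟨m1, m2, m3, d1, d2, d3, h1, h2, h3, h4, h5, h6, h7, h8, h9, h10, h11, h12⟩ := h
  exact ⟨m1, m2, m3, Subtype.coe_ne_coe.mpr d1, Subtype.coe_ne_coe.mpr d2,
    Subtype.coe_ne_coe.mpr d3, h1, h2, h3, h4, h5, h6, h7, h8, h9, h10, h11, h12⟩

lemma p4At_lift {a b c d : V} (ha : a ∈ s) (hb : b ∈ s) (hc : c ∈ s) (hd : d ∈ s)
    (h : p4At G a b c d) : p4At (G.induce s) ⟨a, ha⟩ ⟨b, hb⟩ ⟨c, hc⟩ ⟨d, hd⟩ := by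
  obtain ⟨h1, h2, h3, h4, h5, h6, n1, n2, n3⟩ := h
  exact ⟨h1, h2, h3, h4, h5, h6, Subtype.coe_ne_coe.mp n1,
    Subtype.coe_ne_coe.mp n2, Subtype.coe_ne_coe.mp n3⟩

lemma k2At_lift {a b c d : V} (ha : a ∈ s) (hb : b ∈ s) (hc : c ∈ s) (hd : d ∈ s)
    (h : k2At G a b c d) : k2At (G.induce s) ⟨a, ha⟩ ⟨b, hb⟩ ⟨c, hc⟩ ⟨d, hd⟩ := by
  obtain ⟨h1, h2, h3, h4, h5, h6, n1, n2, n3, n4⟩ := h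
  exact ⟨h1, h2, h3, h4, h5, h6, Subtype.coe_ne_coe.mp n1, Subtype.coe_ne_coe.mp n2,
    Subtype.coe_ne_coe.mp n3, Subtype.coe_ne_coe.mp n4⟩

lemma c4At_lift {a b c d : V} (ha : a ∈ s) (hb : b ∈ s) (hc : c ∈ s) (hd : d ∈ s)
    (h : c4At G a b c d) : c4At (G.induce s) ⟨a, ha⟩ ⟨b, hb⟩ ⟨c, hc⟩ ⟨d, hd⟩ := by
  obtain ⟨h1, h2, h3, h4, h5, h6, n1, n2⟩ := h
  exact ⟨h1, h2, h3, h4, h5, h6, Subtype.coe_ne_coe.mp n1, Subtype.coe_ne_coe.mp n2⟩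

end Threshold

section MoreLifts

open SimpleGraph

variable {V : Type*} {G : SimpleGraph V} {s : Set V}

lemma c4k1At_lift {a b c d e : V} (ha : a ∈ s) (hb : b ∈ s) (hc : c ∈ s) (hd : d ∈ s)
    (he : e ∈ s) (h : c4k1At G a b c d e) :
    c4k1At (G.induce s) ⟨a, ha⟩ ⟨b, hb⟩ ⟨c, hc⟩ ⟨d, hd⟩ ⟨e, he⟩ := by
  obtain ⟨h0, h1, h2, h3, h4, n1, n2, n3, n4⟩ := h
  exact ⟨c4At_lift ha hb hc hd h0, h1, h2, h3, h4, Subtype.coe_ne_coe.mp n1,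
    Subtype.coe_ne_coe.mp n2, Subtype.coe_ne_coe.mp n3, Subtype.coe_ne_coe.mp n4⟩

lemma btfAt_lift {a b v c d : V} (ha : a ∈ s) (hb : b ∈ s) (hv : v ∈ s) (hc : c ∈ s)
    (hd : d ∈ s) (h : btfAt G a b v c d) :
    btfAt (G.induce s) ⟨a, ha⟩ ⟨b, hb⟩ ⟨v, hv⟩ ⟨c, hc⟩ ⟨d, hd⟩ := by
  obtain ⟨h1, h2, h3, h4, h5, h6, h7, h8, h9, h10, n1, n2, n3, n4⟩ := h
  exact ⟨h1, h2, h3, h4, h5, h6, h7, h8, h9, h10, Subtype.coe_ne_coe.mp n1,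
    Subtype.coe_ne_coe.mp n2, Subtype.coe_ne_coe.mp n3, Subtype.coe_ne_coe.mp n4⟩

lemma k32At_lift {a b c d e f : V} (ha : a ∈ s) (hb : b ∈ s) (hc : c ∈ s) (hd : d ∈ s)
    (he : e ∈ s) (hf : f ∈ s) (h : k32At G a b c d e f) :
    k32At (G.induce s) ⟨a, ha⟩ ⟨b, hb⟩ ⟨c, hc⟩ ⟨d, hd⟩ ⟨e, he⟩ ⟨f, hf⟩ :=
  ⟨k2At_lift ha hb hc hd h.1, k2At_lift ha hb he hf h.2.1, k2At_lift hc hd he hf h.2.2⟩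

lemma octAt_lift {a b c d e f : V} (ha : a ∈ s) (hb : b ∈ s) (hc : c ∈ s) (hd : d ∈ s)
    (he : e ∈ s) (hf : f ∈ s) (h : octAt G a b c d e f) :
    octAt (G.induce s) ⟨a, ha⟩ ⟨b, hb⟩ ⟨c, hc⟩ ⟨d, hd⟩ ⟨e, he⟩ ⟨f, hf⟩ := by
  obtain ⟨m1, m2, m3, d1, d2, d3, h1, h2, h3, h4, h5, h6, h7, h8, h9, h10, h11, h12⟩ := h
  exact ⟨m1, m2, m3, Subtype.coe_ne_coe.mp d1, Subtype.coe_ne_coe.mp d2,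
    Subtype.coe_ne_coe.mp d3, h1, h2, h3, h4, h5, h6, h7, h8, h9, h10, h11, h12⟩

end MoreLifts

section Structure

open SimpleGraph

variable {V : Type*} {W : Type*}

/-- A graph with no induced `P₄`, `C₄`, `2K₂` is a threshold graph. -/
lemma isThreshold_of_free [Fintype V] {G : SimpleGraph V}
    (h4 : ¬HasP4 G) (hc4 : ¬HasC4 G) (hk2 : ¬HasK2K2 G) : IsThreshold G := by
  classical
  intro Ws hWne
  by_contra hno
  push_neg at hno
  set Wf : Finset V := Set.Finite.toFinset (Set.toFinite Ws) with hWfdef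
  have hmemWf : ∀ v, v ∈ Wf ↔ v ∈ Ws := fun v => Set.Finite.mem_toFinset _
  have hWfne : Wf.Nonempty := ⟨hWne.choose, (hmemWf _).mpr hWne.choose_spec⟩
  obtain ⟨x, hxf, hmax0⟩ :=
    Wf.exists_max_image (fun v => (Wf.filter (fun u => G.Adj v u)).card) hWfne
  have hmax : ∀ v ∈ Wf, (Wf.filter (fun u => G.Adj v u)).card ≤
      (Wf.filter (fun u => G.Adj x u)).card := fun v hv => hmax0 v hv
  have hxW : x ∈ Ws := (hmemWf x).mp hxf
  obtain ⟨hxne, hxnu⟩ := hno x hxW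
  obtain ⟨y, hyW, hyx, hxy⟩ := hxnu
  by_cases hE : ∃ b, b ∈ Ws ∧ b ≠ x ∧ ¬G.Adj x b ∧
      ∃ b', b' ∈ Ws ∧ b' ≠ x ∧ ¬G.Adj x b' ∧ G.Adj b b'
  · obtain ⟨b, hbW, hbx, hxb, b', hb'W, hb'x, hxb', hbb'⟩ := hE
    have hall : ∀ w ∈ Wf.filter (fun u => G.Adj x u), G.Adj w b ∧ G.Adj w b' := by
      intro w hw
      obtain ⟨hwf, hxw⟩ := Finset.mem_filter.mp hw
      have hwb : w ≠ b := fun h => hxb (h ▸ hxw)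
      have hwb' : w ≠ b' := fun h => hxb' (h ▸ hxw)
      by_cases h1 : G.Adj w b <;> by_cases h2 : G.Adj w b'
      · exact ⟨h1, h2⟩
      · exact absurd ⟨x, w, b, b', hxw, h1, hbb', hxb, hxb', h2,
          hbx.symm, hb'x.symm, hwb'⟩ h4
      · exact absurd ⟨x, w, b', b, hxw, h2, hbb'.symm, hxb', hxb, h1,
          hb'x.symm, hbx.symm, hwb⟩ h4
      · exact absurd ⟨x, w, b, b', hxw, hbb', hxb, hxb', h1, h2,
          hbx.symm, hb'x.symm, hwb, hwb'⟩ hk2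
    have hsub : insert b' (Wf.filter (fun u => G.Adj x u)) ⊆
        Wf.filter (fun u => G.Adj b u) := by
      intro w hw
      rcases Finset.mem_insert.mp hw with rfl | hw'
      · exact Finset.mem_filter.mpr ⟨(hmemWf _).mpr hb'W, hbb'⟩
      · exact Finset.mem_filter.mpr ⟨(Finset.mem_filter.mp hw').1, (hall w hw').1.symm⟩
    have hb'notin : b' ∉ Wf.filter (fun u => G.Adj x u) :=
      fun h => hxb' (Finset.mem_filter.mp h).2
    have h1 := Finset.card_le_card hsub
    rw [Finset.card_insert_of_notMem hb'notin] at h1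
    have h2 := hmax b ((hmemWf b).mpr hbW)
    omega
  · push_neg at hE
    obtain ⟨z, hzW, hyz⟩ := (hno y hyW).1
    have hzx : z ≠ x := by
      intro h
      subst h
      exact hxy hyz.symm
    have hxz : G.Adj x z := by
      by_contra hxz
      exact hE y hyW hyx hxy z hzW hzx hxz hyz
    have hNyNx : Wf.filter (fun u => G.Adj y u) ⊆ Wf.filter (fun u => G.Adj x u) := by
      intro w hw
      obtain ⟨hwf, hyw⟩ := Finset.mem_filter.mp hw
      have hwx : w ≠ x := fun h => hxy (h ▸ hyw).symm
      have hxw : G.Adj x w := by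
        by_contra hxw
        exact hE y hyW hyx hxy w ((hmemWf w).mp hwf) hwx hxw hyw
      exact Finset.mem_filter.mpr ⟨hwf, hxw⟩
    have hclique : ∀ u ∈ Wf.filter (fun u => G.Adj y u),
        ∀ v ∈ Wf.filter (fun u => G.Adj y u), u ≠ v → G.Adj u v := by
      intro u hu v hv huv
      by_contra huvn
      have hyu := (Finset.mem_filter.mp hu).2
      have hyv := (Finset.mem_filter.mp hv).2
      have hxu := (Finset.mem_filter.mp (hNyNx hu)).2
      have hxv := (Finset.mem_filter.mp (hNyNx hv)).2
      exact absurd ⟨x, u, y, v, hxu, hyu.symm, hyv, hxv.symm, hxy, huvn,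
        Ne.symm hyx, huv⟩ hc4
    have hcross : ∀ w ∈ Wf.filter (fun u => G.Adj x u),
        w ∉ Wf.filter (fun u => G.Adj y u) →
        ∀ u ∈ Wf.filter (fun u => G.Adj y u), G.Adj w u := by
      intro w hwNx hwNy u huNy
      by_contra hwu
      have hwf := (Finset.mem_filter.mp hwNx).1
      have hxw := (Finset.mem_filter.mp hwNx).2
      have hyu := (Finset.mem_filter.mp huNy).2
      have hyw : ¬G.Adj y w := fun h => hwNy (Finset.mem_filter.mpr ⟨hwf, h⟩)
      have hxu := (Finset.mem_filter.mp (hNyNx huNy)).2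
      exact absurd ⟨y, u, x, w, hyu, hxu.symm, hxw, fun h => hxy h.symm, hyw,
        fun h => hwu h.symm, hyx, fun h => hxy (h ▸ hxw),
        fun h => hwNy (h ▸ huNy)⟩ h4
    have hzNy : z ∈ Wf.filter (fun u => G.Adj y u) :=
      Finset.mem_filter.mpr ⟨(hmemWf z).mpr hzW, hyz⟩
    have hxNy : x ∉ Wf.filter (fun u => G.Adj y u) :=
      fun h => hxy ((Finset.mem_filter.mp h).2).symm
    have hxNx : x ∉ Wf.filter (fun u => G.Adj x u) :=
      fun h => G.irrefl (Finset.mem_filter.mp h).2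
    have hyNy : y ∉ Wf.filter (fun u => G.Adj y u) :=
      fun h => G.irrefl (Finset.mem_filter.mp h).2
    have hyNx : y ∉ Wf.filter (fun u => G.Adj x u) :=
      fun h => hxy (Finset.mem_filter.mp h).2
    set U : Finset V := (Wf.filter (fun u => G.Adj y u)).erase z ∪
      (Wf.filter (fun u => G.Adj x u) \ Wf.filter (fun u => G.Adj y u)) with hUdef
    have hsub : insert x (insert y U) ⊆ Wf.filter (fun u => G.Adj z u) := by
      intro w hw
      rcases Finset.mem_insert.mp hw with rfl | hw
      · exact Finset.mem_filter.mpr ⟨hxf, hxz.symm⟩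
      rcases Finset.mem_insert.mp hw with rfl | hw
      · exact Finset.mem_filter.mpr ⟨(hmemWf w).mpr hyW, hyz.symm⟩
      rcases Finset.mem_union.mp hw with hw | hw
      · have hwz := (Finset.mem_erase.mp hw).1
        have hwNy := (Finset.mem_erase.mp hw).2
        exact Finset.mem_filter.mpr ⟨(Finset.mem_filter.mp hwNy).1,
          hclique z hzNy w hwNy (Ne.symm hwz)⟩
      · have hwNx := (Finset.mem_sdiff.mp hw).1
        have hwNy := (Finset.mem_sdiff.mp hw).2
        exact Finset.mem_filter.mpr ⟨(Finset.mem_filter.mp hwNx).1,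
          (hcross w hwNx hwNy z hzNy).symm⟩
    have hdisj2 : Disjoint ((Wf.filter (fun u => G.Adj y u)).erase z)
        (Wf.filter (fun u => G.Adj x u) \ Wf.filter (fun u => G.Adj y u)) :=
      Finset.disjoint_left.mpr fun w hw hw' =>
        (Finset.mem_sdiff.mp hw').2 (Finset.mem_of_mem_erase hw)
    have hycard : 1 ≤ (Wf.filter (fun u => G.Adj y u)).card :=
      Finset.card_pos.mpr ⟨z, hzNy⟩
    have hxycard : (Wf.filter (fun u => G.Adj y u)).card ≤
        (Wf.filter (fun u => G.Adj x u)).card := Finset.card_le_card hNyNx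
    have hUcard : U.card = (Wf.filter (fun u => G.Adj x u)).card - 1 := by
      rw [hUdef, Finset.card_union_of_disjoint hdisj2, Finset.card_erase_of_mem hzNy,
        Finset.card_sdiff_of_subset hNyNx]
      omega
    have hy_not : y ∉ U := by
      rw [hUdef]
      intro h
      rcases Finset.mem_union.mp h with h | h
      · exact hyNy (Finset.mem_of_mem_erase h)
      · exact hyNx (Finset.mem_sdiff.mp h).1
    have hx_not : x ∉ insert y U := by
      intro h
      rcases Finset.mem_insert.mp h with h | h
      · exact hyx h.symm
      · rw [hUdef] at h
        rcases Finset.mem_union.mp h with h | h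
        · exact hxNy (Finset.mem_of_mem_erase h)
        · exact hxNx (Finset.mem_sdiff.mp h).1
    have hScard := Finset.card_le_card hsub
    rw [Finset.card_insert_of_notMem hx_not, Finset.card_insert_of_notMem hy_not] at hScard
    have hzmax := hmax z ((hmemWf z).mpr hzW)
    omega

/-- Two disjoint edges cannot be connected in a `{P₄, butterfly}`-free graph. -/
lemma reach_aux {G : SimpleGraph V} (h4 : ¬HasP4 G) (hbf : ¬HasBtf G) :
    ∀ {e g : V}, (w : G.Walk e g) → ∀ f h : V, G.Adj e f → G.Adj g h →
      ¬G.Adj e g → ¬G.Adj e h → ¬G.Adj f g → ¬G.Adj f h →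
      e ≠ g → e ≠ h → f ≠ g → f ≠ h → False := by
  intro e g w
  induction w with
  | nil => intro f h _ _ _ _ _ _ neg _ _ _; exact neg rfl
  | @cons e v1 g hadj w' ih =>
    intro f h hef hgh heg heh hfg hfh neg neh nfg nfh
    by_cases hv1g : v1 = g
    · exact heg (hv1g ▸ hadj)
    by_cases hv1h : v1 = h
    · exact heh (hv1h ▸ hadj)
    by_cases hv1f : v1 = f
    · subst hv1f
      exact ih e h hadj.symm hgh hfg hfh heg heh nfg nfh neg neh
    by_cases hv1gadj : G.Adj v1 g
    · by_cases hv1fadj : G.Adj f v1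
      · by_cases hv1hadj : G.Adj v1 h
        · exact hbf ⟨e, f, v1, g, h, hef, hadj, hv1fadj, hv1gadj, hv1hadj, hgh,
            heg, heh, hfg, hfh, neg, neh, nfg, nfh⟩
        · exact h4 ⟨e, v1, g, h, hadj, hv1gadj, hgh, heg, heh, hv1hadj, neg, neh, hv1h⟩
      · exact h4 ⟨f, e, v1, g, hef.symm, hadj, hv1gadj, fun hh => hv1fadj hh,
          hfg, heg, fun hh => hv1f hh.symm, nfg, neg⟩
    · by_cases hv1hadj : G.Adj v1 h
      · exact h4 ⟨e, v1, h, g, hadj, hv1hadj, hgh.symm, heh, heg, hv1gadj, neh, neg, hv1g⟩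
      · exact ih e h hadj.symm hgh hv1gadj hv1hadj heg heh hv1g hv1h neg neh

/-- A graph containing an induced `2K₂` but none of the five forbidden configurations is
the disjoint union of two threshold graphs. -/
lemma union_of_k2k2 [Fintype W] {K : SimpleGraph W}
    (h4 : ¬HasP4 K) (hck : ¬HasC4K1 K) (hbf : ¬HasBtf K) (h3 : ¬Has3K2 K)
    (hk : HasK2K2 K) : IsUnionTwoThreshold K := by
  classical
  obtain ⟨a, b, c, d, hab, hcd, hac, had, hbc, hbd, nac, nad, nbc, nbd⟩ := hk
  have hreach : ∀ {p q r s : W}, K.Adj p q → K.Adj r s → ¬K.Adj p r → ¬K.Adj p s →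
      ¬K.Adj q r → ¬K.Adj q s → p ≠ r → p ≠ s → q ≠ r → q ≠ s → ¬K.Reachable p r := by
    intro p q r s m1 m2 m3 m4 m5 m6 n1 n2 n3 n4 hr
    obtain ⟨w⟩ := hr
    exact reach_aux h4 hbf w q s m1 m2 m3 m4 m5 m6 n1 n2 n3 n4
  have haA : K.Reachable a a := ⟨SimpleGraph.Walk.nil⟩
  have hstep : ∀ {u v : W}, K.Reachable a u → K.Adj u v → K.Reachable a v :=
    fun hu huv => hu.trans huv.reachable
  have hcA : ¬K.Reachable a c := hreach hab hcd hac had hbc hbd nac nad nbc nbd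
  refine ⟨{v | K.Reachable a v}, {v | K.Reachable a v}ᶜ, ⟨a, haA⟩, ⟨c, hcA⟩,
    Set.union_compl_self _, disjoint_compl_right, ?_, ?_, ?_⟩
  · exact fun u hu v hv huv => hv (hstep hu huv)
  · apply isThreshold_of_free
    · rintro ⟨p, q, r, s, hp⟩
      exact h4 ⟨_, _, _, _, p4At_val hp⟩
    · rintro ⟨p, q, r, s, hp⟩
      refine hck ⟨p.1, q.1, r.1, s.1, c, c4At_val hp, ?_, ?_, ?_, ?_, ?_, ?_, ?_, ?_⟩
      · exact fun h => hcA (hstep p.2 h)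
      · exact fun h => hcA (hstep q.2 h)
      · exact fun h => hcA (hstep r.2 h)
      · exact fun h => hcA (hstep s.2 h)
      · exact fun h => hcA (show K.Reachable a c by rw [← h]; exact p.2)
      · exact fun h => hcA (show K.Reachable a c by rw [← h]; exact q.2)
      · exact fun h => hcA (show K.Reachable a c by rw [← h]; exact r.2)
      · exact fun h => hcA (show K.Reachable a c by rw [← h]; exact s.2)
    · rintro ⟨p, q, r, s, hp⟩
      obtain ⟨m1, m2, m3, m4, m5, m6, n1, n2, n3, n4⟩ := k2At_val hp
      exact hreach m1 m2 m3 m4 m5 m6 n1 n2 n3 n4 ((p.2 : K.Reachable a p.1).symm.trans r.2)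
  · apply isThreshold_of_free
    · rintro ⟨p, q, r, s, hp⟩
      exact h4 ⟨_, _, _, _, p4At_val hp⟩
    · rintro ⟨p, q, r, s, hp⟩
      refine hck ⟨p.1, q.1, r.1, s.1, a, c4At_val hp, ?_, ?_, ?_, ?_, ?_, ?_, ?_, ?_⟩
      · exact fun h => p.2 (hstep haA h.symm)
      · exact fun h => q.2 (hstep haA h.symm)
      · exact fun h => r.2 (hstep haA h.symm)
      · exact fun h => s.2 (hstep haA h.symm)
      · exact fun h => p.2 (show K.Reachable a p.1 by rw [h])
      · exact fun h => q.2 (show K.Reachable a q.1 by rw [h])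
      · exact fun h => r.2 (show K.Reachable a r.1 by rw [h])
      · exact fun h => s.2 (show K.Reachable a s.1 by rw [h])
    · rintro ⟨p, q, r, s, hp⟩
      obtain ⟨m1, m2, m3, m4, m5, m6, n1, n2, n3, n4⟩ := k2At_val hp
      have hbA : K.Reachable a b := hstep haA hab
      refine h3 ⟨a, b, p.1, q.1, r.1, s.1,
        ⟨hab, m1, ?_, ?_, ?_, ?_, ?_, ?_, ?_, ?_⟩,
        ⟨hab, m2, ?_, ?_, ?_, ?_, ?_, ?_, ?_, ?_⟩,
        ⟨m1, m2, m3, m4, m5, m6, n1, n2, n3, n4⟩⟩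
      · exact fun h => p.2 (hstep haA h)
      · exact fun h => q.2 (hstep haA h)
      · exact fun h => p.2 (hstep hbA h)
      · exact fun h => q.2 (hstep hbA h)
      · exact fun h => p.2 (show K.Reachable a p.1 by rw [← h])
      · exact fun h => q.2 (show K.Reachable a q.1 by rw [← h])
      · exact fun h => p.2 (show K.Reachable a p.1 by rw [← h]; exact hbA)
      · exact fun h => q.2 (show K.Reachable a q.1 by rw [← h]; exact hbA)
      · exact fun h => r.2 (hstep haA h)
      · exact fun h => s.2 (hstep haA h)
      · exact fun h => r.2 (hstep hbA h)
      · exact fun h => s.2 (hstep hbA h)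
      · exact fun h => r.2 (show K.Reachable a r.1 by rw [← h])
      · exact fun h => s.2 (show K.Reachable a s.1 by rw [← h])
      · exact fun h => r.2 (show K.Reachable a r.1 by rw [← h]; exact hbA)
      · exact fun h => s.2 (show K.Reachable a s.1 by rw [← h]; exact hbA)

/-- The structure theorem: a graph free of the five forbidden configurations is threshold,
a union of two thresholds, or a join of two thresholds. -/
lemma struct_of_free [Fintype W] {K : SimpleGraph W}
    (h4 : ¬HasP4 K) (hck : ¬HasC4K1 K) (hbf : ¬HasBtf K) (h3 : ¬Has3K2 K) (ho : ¬HasOct K) :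
    IsThreshold K ∨ IsUnionTwoThreshold K ∨ IsJoinTwoThreshold K := by
  by_cases hk : HasK2K2 K
  · exact Or.inr (Or.inl (union_of_k2k2 h4 hck hbf h3 hk))
  by_cases hc : HasC4 K
  · refine Or.inr (Or.inr ?_)
    rw [isJoin_iff_isUnion_compl]
    apply union_of_k2k2
    · rintro ⟨a, b, c, d, h⟩
      have := p4At_compl h
      rw [compl_compl] at this
      exact h4 ⟨_, _, _, _, this⟩
    · rintro ⟨a, b, c, d, e, h⟩
      have := c4k1At_compl h
      rw [compl_compl] at this
      exact hbf ⟨_, _, _, _, _, this⟩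
    · rintro ⟨a, b, v, c, d, h⟩
      have := btfAt_compl h
      rw [compl_compl] at this
      exact hck ⟨_, _, _, _, _, this⟩
    · rintro ⟨a, b, c, d, e, f, h⟩
      have := k32At_compl h
      rw [compl_compl] at this
      exact ho ⟨_, _, _, _, _, _, this⟩
    · obtain ⟨a, b, c, d, h⟩ := hc
      exact ⟨_, _, _, _, c4At_compl h⟩
  · exact Or.inl (isThreshold_of_free h4 hc hk)

end Structure

section Bad

open SimpleGraph

variable {W : Type*} {K : SimpleGraph W}

lemma mem_part {A B : Set W} (hcov : A ∪ B = Set.univ) (v : W) : v ∈ A ∨ v ∈ B := by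
  have : v ∈ A ∪ B := hcov.symm ▸ Set.mem_univ v
  exact this

lemma notUnion_p4 {a b c d : W} (h : p4At K a b c d) : ¬IsUnionTwoThreshold K := by
  rintro ⟨A, B, -, -, hcov, hdisj, hcross, tA, tB⟩
  have step : ∀ {u v : W}, K.Adj u v → u ∈ A → v ∈ A := by
    intro u v huv hu
    rcases mem_part hcov v with h' | h'
    · exact h'
    · exact absurd huv (hcross u hu v h')
  have stepB : ∀ {u v : W}, K.Adj u v → u ∈ B → v ∈ B := by
    intro u v huv hu
    rcases mem_part hcov v with h' | h'
    · exact absurd huv.symm (hcross v h' u hu)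
    · exact h'
  rcases mem_part hcov a with ha | ha
  · have hb := step h.1 ha; have hc := step h.2.1 hb; have hd := step h.2.2.1 hc
    exact not_threshold_p4 (p4At_lift ha hb hc hd h) tA
  · have hb := stepB h.1 ha; have hc := stepB h.2.1 hb; have hd := stepB h.2.2.1 hc
    exact not_threshold_p4 (p4At_lift ha hb hc hd h) tB

lemma notUnion_c4k1 {a b c d e : W} (h : c4k1At K a b c d e) : ¬IsUnionTwoThreshold K := by
  rintro ⟨A, B, -, -, hcov, hdisj, hcross, tA, tB⟩
  have step : ∀ {u v : W}, K.Adj u v → u ∈ A → v ∈ A := by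
    intro u v huv hu
    rcases mem_part hcov v with h' | h'
    · exact h'
    · exact absurd huv (hcross u hu v h')
  have stepB : ∀ {u v : W}, K.Adj u v → u ∈ B → v ∈ B := by
    intro u v huv hu
    rcases mem_part hcov v with h' | h'
    · exact absurd huv.symm (hcross v h' u hu)
    · exact h'
  rcases mem_part hcov a with ha | ha
  · have hb := step h.1.1 ha; have hc := step h.1.2.1 hb; have hd := step h.1.2.2.1 hc
    exact not_threshold_c4 (c4At_lift ha hb hc hd h.1) tA
  · have hb := stepB h.1.1 ha; have hc := stepB h.1.2.1 hb; have hd := stepB h.1.2.2.1 hc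
    exact not_threshold_c4 (c4At_lift ha hb hc hd h.1) tB

lemma notUnion_btf {a b v c d : W} (h : btfAt K a b v c d) : ¬IsUnionTwoThreshold K := by
  rintro ⟨A, B, -, -, hcov, hdisj, hcross, tA, tB⟩
  have step : ∀ {u v : W}, K.Adj u v → u ∈ A → v ∈ A := by
    intro u v huv hu
    rcases mem_part hcov v with h' | h'
    · exact h'
    · exact absurd huv (hcross u hu v h')
  have stepB : ∀ {u v : W}, K.Adj u v → u ∈ B → v ∈ B := by
    intro u v huv hu
    rcases mem_part hcov v with h' | h'
    · exact absurd huv.symm (hcross v h' u hu)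
    · exact h'
  obtain ⟨hab, hav, hbv, hvc, hvd, hcd, hac, had, hbc, hbd, n1, n2, n3, n4⟩ := h
  have hk : k2At K a b c d := ⟨hab, hcd, hac, had, hbc, hbd, n1, n2, n3, n4⟩
  rcases mem_part hcov a with ha | ha
  · have hb := step hab ha; have hv' := step hav ha
    have hc := step hvc hv'; have hd := step hcd hc
    exact not_threshold_k2 (k2At_lift ha hb hc hd hk) tA
  · have hb := stepB hab ha; have hv' := stepB hav ha
    have hc := stepB hvc hv'; have hd := stepB hcd hc
    exact not_threshold_k2 (k2At_lift ha hb hc hd hk) tB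

lemma notUnion_3k2 {a b c d e f : W} (h : k32At K a b c d e f) : ¬IsUnionTwoThreshold K := by
  rintro ⟨A, B, -, -, hcov, hdisj, hcross, tA, tB⟩
  have step : ∀ {u v : W}, K.Adj u v → u ∈ A → v ∈ A := by
    intro u v huv hu
    rcases mem_part hcov v with h' | h'
    · exact h'
    · exact absurd huv (hcross u hu v h')
  have stepB : ∀ {u v : W}, K.Adj u v → u ∈ B → v ∈ B := by
    intro u v huv hu
    rcases mem_part hcov v with h' | h'
    · exact absurd huv.symm (hcross v h' u hu)
    · exact h'
  obtain ⟨h1, h2, h3⟩ := h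
  rcases mem_part hcov a with ha | ha <;> rcases mem_part hcov c with hc | hc <;>
    rcases mem_part hcov e with he | he
  · exact not_threshold_k2 (k2At_lift ha (step h1.1 ha) hc (step h1.2.1 hc) h1) tA
  · exact not_threshold_k2 (k2At_lift ha (step h1.1 ha) hc (step h1.2.1 hc) h1) tA
  · exact not_threshold_k2 (k2At_lift ha (step h2.1 ha) he (step h2.2.1 he) h2) tA
  · exact not_threshold_k2 (k2At_lift hc (stepB h3.1 hc) he (stepB h3.2.1 he) h3) tB
  · exact not_threshold_k2 (k2At_lift hc (step h3.1 hc) he (step h3.2.1 he) h3) tA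
  · exact not_threshold_k2 (k2At_lift ha (stepB h2.1 ha) he (stepB h2.2.1 he) h2) tB
  · exact not_threshold_k2 (k2At_lift ha (stepB h1.1 ha) hc (stepB h1.2.1 hc) h1) tB
  · exact not_threshold_k2 (k2At_lift ha (stepB h1.1 ha) hc (stepB h1.2.1 hc) h1) tB

lemma notUnion_oct {a b c d e f : W} (h : octAt K a b c d e f) : ¬IsUnionTwoThreshold K := by
  rintro ⟨A, B, -, -, hcov, hdisj, hcross, tA, tB⟩
  have step : ∀ {u v : W}, K.Adj u v → u ∈ A → v ∈ A := by
    intro u v huv hu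
    rcases mem_part hcov v with h' | h'
    · exact h'
    · exact absurd huv (hcross u hu v h')
  have stepB : ∀ {u v : W}, K.Adj u v → u ∈ B → v ∈ B := by
    intro u v huv hu
    rcases mem_part hcov v with h' | h'
    · exact absurd huv.symm (hcross v h' u hu)
    · exact h'
  obtain ⟨nab, ncd, nef, dab, dcd, def', hac, had, hbc, hbd, hae, haf, hbe, hbf,
    hce, hcf, hde, hdf⟩ := h
  have hc4 : c4At K a c b d := ⟨hac, hbc.symm, hbd, had.symm, nab, ncd, dab, dcd⟩
  rcases mem_part hcov a with ha | ha
  · have hc := step hac ha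
    have hb := step hbc.symm hc
    have hd := step had ha
    exact not_threshold_c4 (c4At_lift ha hc hb hd hc4) tA
  · have hc := stepB hac ha
    have hb := stepB hbc.symm hc
    have hd := stepB had ha
    exact not_threshold_c4 (c4At_lift ha hc hb hd hc4) tB

lemma notJoin_p4 {a b c d : W} (h : p4At K a b c d) : ¬IsJoinTwoThreshold K :=
  fun hj => notUnion_p4 (p4At_compl h) ((isJoin_iff_isUnion_compl K).mp hj)

lemma notJoin_c4k1 {a b c d e : W} (h : c4k1At K a b c d e) : ¬IsJoinTwoThreshold K :=
  fun hj => notUnion_btf (c4k1At_compl h) ((isJoin_iff_isUnion_compl K).mp hj)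

lemma notJoin_btf {a b v c d : W} (h : btfAt K a b v c d) : ¬IsJoinTwoThreshold K :=
  fun hj => notUnion_c4k1 (btfAt_compl h) ((isJoin_iff_isUnion_compl K).mp hj)

lemma notJoin_3k2 {a b c d e f : W} (h : k32At K a b c d e f) : ¬IsJoinTwoThreshold K :=
  fun hj => notUnion_oct (k32At_compl h) ((isJoin_iff_isUnion_compl K).mp hj)

lemma notJoin_oct {a b c d e f : W} (h : octAt K a b c d e f) : ¬IsJoinTwoThreshold K :=
  fun hj => notUnion_3k2 (octAt_compl h) ((isJoin_iff_isUnion_compl K).mp hj)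

lemma bad_p4 {a b c d : W} (h : p4At K a b c d) :
    ¬(IsThreshold K ∨ IsUnionTwoThreshold K ∨ IsJoinTwoThreshold K) := by
  rintro (t | u | j)
  exacts [not_threshold_p4 h t, notUnion_p4 h u, notJoin_p4 h j]

lemma bad_c4k1 {a b c d e : W} (h : c4k1At K a b c d e) :
    ¬(IsThreshold K ∨ IsUnionTwoThreshold K ∨ IsJoinTwoThreshold K) := by
  rintro (t | u | j)
  exacts [not_threshold_c4 h.1 t, notUnion_c4k1 h u, notJoin_c4k1 h j]

lemma bad_btf {a b v c d : W} (h : btfAt K a b v c d) :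
    ¬(IsThreshold K ∨ IsUnionTwoThreshold K ∨ IsJoinTwoThreshold K) := by
  obtain ⟨hab, hav, hbv, hvc, hvd, hcd, hac, had, hbc, hbd, n1, n2, n3, n4⟩ := h
  rintro (t | u | j)
  exacts [not_threshold_k2 ⟨hab, hcd, hac, had, hbc, hbd, n1, n2, n3, n4⟩ t,
    notUnion_btf ⟨hab, hav, hbv, hvc, hvd, hcd, hac, had, hbc, hbd, n1, n2, n3, n4⟩ u,
    notJoin_btf ⟨hab, hav, hbv, hvc, hvd, hcd, hac, had, hbc, hbd, n1, n2, n3, n4⟩ j]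

lemma bad_3k2 {a b c d e f : W} (h : k32At K a b c d e f) :
    ¬(IsThreshold K ∨ IsUnionTwoThreshold K ∨ IsJoinTwoThreshold K) := by
  rintro (t | u | j)
  exacts [not_threshold_k2 h.1 t, notUnion_3k2 h u, notJoin_3k2 h j]

lemma bad_oct {a b c d e f : W} (h : octAt K a b c d e f) :
    ¬(IsThreshold K ∨ IsUnionTwoThreshold K ∨ IsJoinTwoThreshold K) := by
  obtain ⟨nab, ncd, nef, dab, dcd, def', hac, had, hbc, hbd, hae, haf, hbe, hbf,
    hce, hcf, hde, hdf⟩ := h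
  rintro (t | u | j)
  exacts [not_threshold_c4 ⟨hac, hbc.symm, hbd, had.symm, nab, ncd, dab, dcd⟩ t,
    notUnion_oct ⟨nab, ncd, nef, dab, dcd, def', hac, had, hbc, hbd, hae, haf, hbe, hbf,
      hce, hcf, hde, hdf⟩ u,
    notJoin_oct ⟨nab, ncd, nef, dab, dcd, def', hac, had, hbc, hbd, hae, haf, hbe, hbf,
      hce, hcf, hde, hdf⟩ j]

end Bad

section Embeddings

open SimpleGraph

variable {V : Type*} {G : SimpleGraph V}

instance graphOfEdges.decAdj (n : ℕ) (E : List (Fin n × Fin n)) :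
    DecidableRel (graphOfEdges n E).Adj := fun a b =>
  decidable_of_iff _ (SimpleGraph.fromRel_adj _ a b).symm

instance : DecidableRel gem.Adj :=
  inferInstanceAs (DecidableRel (graphOfEdges 5
    [(0, 1), (1, 2), (2, 3), (4, 0), (4, 1), (4, 2), (4, 3)]).Adj)

instance : DecidableRel c4K1Universal.Adj :=
  inferInstanceAs (DecidableRel (graphOfEdges 6
    [(0, 1), (1, 2), (2, 3), (3, 0), (5, 0), (5, 1), (5, 2), (5, 3), (5, 4)]).Adj)

instance : DecidableRel butterflyUniversal.Adj :=
  inferInstanceAs (DecidableRel (graphOfEdges 6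
    [(0, 1), (0, 2), (1, 2), (2, 3), (2, 4), (3, 4),
      (5, 0), (5, 1), (5, 2), (5, 3), (5, 4)]).Adj)

instance : DecidableRel threeK2Universal.Adj :=
  inferInstanceAs (DecidableRel (graphOfEdges 7
    [(0, 1), (2, 3), (4, 5), (6, 0), (6, 1), (6, 2), (6, 3), (6, 4), (6, 5)]).Adj)

instance : DecidableRel octahedronUniversal.Adj :=
  inferInstanceAs (DecidableRel (graphOfEdges 7
    [(0, 2), (0, 3), (0, 4), (0, 5), (1, 2), (1, 3), (1, 4), (1, 5),
      (2, 4), (2, 5), (3, 4), (3, 5), (6, 0), (6, 1), (6, 2), (6, 3), (6, 4), (6, 5)]).Adj)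

@[simp] lemma Matrix.cons_val_five' {α : Type*} {m : ℕ} (x : α) (u : Fin (m + 5) → α) :
    Matrix.vecCons x u 5 =
      Matrix.vecHead (Matrix.vecTail (Matrix.vecTail (Matrix.vecTail (Matrix.vecTail u)))) := rfl

@[simp] lemma Matrix.cons_val_six' {α : Type*} {m : ℕ} (x : α) (u : Fin (m + 6) → α) :
    Matrix.vecCons x u 6 =
      Matrix.vecHead (Matrix.vecTail (Matrix.vecTail (Matrix.vecTail (Matrix.vecTail
        (Matrix.vecTail u))))) := rfl

/-- Build a graph embedding from a function with prescribed adjacency behaviour. -/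
def buildEmb {n : ℕ} (P : SimpleGraph (Fin n)) (f : Fin n → V)
    (h : ∀ i j, i ≠ j → (P.Adj i j → G.Adj (f i) (f j)) ∧
      (¬P.Adj i j → ¬G.Adj (f i) (f j) ∧ f i ≠ f j)) :
    P ↪g G where
  toFun := f
  inj' := by
    intro i j hij
    by_contra hne
    by_cases hP : P.Adj i j
    · exact ((h i j hne).1 hP).ne hij
    · exact ((h i j hne).2 hP).2 hij
  map_rel_iff' := by
    intro i j
    by_cases hij : i = j
    · subst hij
      exact ⟨fun h' => absurd h' (G.loopless.irrefl _), fun h' => absurd h' (P.loopless.irrefl _)⟩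
    · exact ⟨fun hG => by_contra fun hP => ((h i j hij).2 hP).1 hG, (h i j hij).1⟩

set_option maxHeartbeats 1000000

/- ---------------- constructing embeddings from configurations ---------------- -/

def build_gem {x : V} {a b c d : ↥(G.neighborSet x)}
    (h : p4At (G.induce (G.neighborSet x)) a b c d) : gem ↪g G := by
  obtain ⟨h01, h12, h23, h02, h03, h13, n02, n03, n13⟩ := p4At_val h
  have h10 := h01.symm; have h21 := h12.symm; have h32 := h23.symm
  have h20 : ¬G.Adj c.1 a.1 := fun h' => h02 h'.symm
  have h30 : ¬G.Adj d.1 a.1 := fun h' => h03 h'.symm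
  have h31 : ¬G.Adj d.1 b.1 := fun h' => h13 h'.symm
  have n20 := n02.symm; have n30 := n03.symm; have n31 := n13.symm
  have hx0 : G.Adj x a.1 := a.2
  have hx1 : G.Adj x b.1 := b.2
  have hx2 : G.Adj x c.1 := c.2
  have hx3 : G.Adj x d.1 := d.2
  have h0x := hx0.symm; have h1x := hx1.symm; have h2x := hx2.symm; have h3x := hx3.symm
  refine buildEmb gem ![a.1, b.1, c.1, d.1, x] ?_
  intro i j hij
  fin_cases i <;> fin_cases j <;>
    simp_all (config := { decide := true }) [gem, graphOfEdges, SimpleGraph.fromRel_adj]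

def build_c4k1 {x : V} {a b c d e : ↥(G.neighborSet x)}
    (h : c4k1At (G.induce (G.neighborSet x)) a b c d e) : c4K1Universal ↪g G := by
  obtain ⟨⟨h01, h12, h23, h30, h02, h13, n02, n13⟩, h04, h14, h24, h34, n04, n14, n24, n34⟩ :=
    c4k1At_val h
  have h10 := h01.symm; have h21 := h12.symm; have h32 := h23.symm; have h03 := h30.symm
  have h20 : ¬G.Adj c.1 a.1 := fun h' => h02 h'.symm
  have h31 : ¬G.Adj d.1 b.1 := fun h' => h13 h'.symm
  have h40 : ¬G.Adj e.1 a.1 := fun h' => h04 h'.symm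
  have h41 : ¬G.Adj e.1 b.1 := fun h' => h14 h'.symm
  have h42 : ¬G.Adj e.1 c.1 := fun h' => h24 h'.symm
  have h43 : ¬G.Adj e.1 d.1 := fun h' => h34 h'.symm
  have n20 := n02.symm; have n31 := n13.symm
  have n40 := n04.symm; have n41 := n14.symm; have n42 := n24.symm; have n43 := n34.symm
  have hx0 : G.Adj x a.1 := a.2
  have hx1 : G.Adj x b.1 := b.2
  have hx2 : G.Adj x c.1 := c.2
  have hx3 : G.Adj x d.1 := d.2
  have hx4 : G.Adj x e.1 := e.2
  have h0x := hx0.symm; have h1x := hx1.symm; have h2x := hx2.symm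
  have h3x := hx3.symm; have h4x := hx4.symm
  refine buildEmb c4K1Universal ![a.1, b.1, c.1, d.1, e.1, x] ?_
  intro i j hij
  fin_cases i <;> fin_cases j <;>
    simp_all (config := { decide := true }) [c4K1Universal, graphOfEdges,
      SimpleGraph.fromRel_adj]

def build_btf {x : V} {a b v c d : ↥(G.neighborSet x)}
    (h : btfAt (G.induce (G.neighborSet x)) a b v c d) : butterflyUniversal ↪g G := by
  obtain ⟨h01, h02, h12, h23, h24, h34, h03, h04, h13, h14, n03, n04, n13, n14⟩ := btfAt_val h
  have h10 := h01.symm; have h20 := h02.symm; have h21 := h12.symm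
  have h32 := h23.symm; have h42 := h24.symm; have h43 := h34.symm
  have h30 : ¬G.Adj c.1 a.1 := fun h' => h03 h'.symm
  have h40 : ¬G.Adj d.1 a.1 := fun h' => h04 h'.symm
  have h31 : ¬G.Adj c.1 b.1 := fun h' => h13 h'.symm
  have h41 : ¬G.Adj d.1 b.1 := fun h' => h14 h'.symm
  have n30 := n03.symm; have n40 := n04.symm; have n31 := n13.symm; have n41 := n14.symm
  have hx0 : G.Adj x a.1 := a.2
  have hx1 : G.Adj x b.1 := b.2
  have hx2 : G.Adj x v.1 := v.2
  have hx3 : G.Adj x c.1 := c.2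
  have hx4 : G.Adj x d.1 := d.2
  have h0x := hx0.symm; have h1x := hx1.symm; have h2x := hx2.symm
  have h3x := hx3.symm; have h4x := hx4.symm
  refine buildEmb butterflyUniversal ![a.1, b.1, v.1, c.1, d.1, x] ?_
  intro i j hij
  fin_cases i <;> fin_cases j <;>
    simp_all (config := { decide := true }) [butterflyUniversal, graphOfEdges,
      SimpleGraph.fromRel_adj]

def build_3k2 {x : V} {a b c d e f : ↥(G.neighborSet x)}
    (h : k32At (G.induce (G.neighborSet x)) a b c d e f) : threeK2Universal ↪g G := by
  obtain ⟨⟨h01, h23, h02, h03, h12, h13, n02, n03, n12, n13⟩,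
    ⟨_, h45, h04, h05, h14, h15, n04, n05, n14, n15⟩,
    ⟨_, _, h24, h25, h34, h35, n24, n25, n34, n35⟩⟩ := k32At_val h
  have h10 := h01.symm; have h32 := h23.symm; have h54 := h45.symm
  have h20 : ¬G.Adj c.1 a.1 := fun h' => h02 h'.symm
  have h30 : ¬G.Adj d.1 a.1 := fun h' => h03 h'.symm
  have h21 : ¬G.Adj c.1 b.1 := fun h' => h12 h'.symm
  have h31 : ¬G.Adj d.1 b.1 := fun h' => h13 h'.symm
  have h40 : ¬G.Adj e.1 a.1 := fun h' => h04 h'.symm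
  have h50 : ¬G.Adj f.1 a.1 := fun h' => h05 h'.symm
  have h41 : ¬G.Adj e.1 b.1 := fun h' => h14 h'.symm
  have h51 : ¬G.Adj f.1 b.1 := fun h' => h15 h'.symm
  have h42 : ¬G.Adj e.1 c.1 := fun h' => h24 h'.symm
  have h52 : ¬G.Adj f.1 c.1 := fun h' => h25 h'.symm
  have h43 : ¬G.Adj e.1 d.1 := fun h' => h34 h'.symm
  have h53 : ¬G.Adj f.1 d.1 := fun h' => h35 h'.symm
  have n20 := n02.symm; have n30 := n03.symm; have n21 := n12.symm; have n31 := n13.symm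
  have n40 := n04.symm; have n50 := n05.symm; have n41 := n14.symm; have n51 := n15.symm
  have n42 := n24.symm; have n52 := n25.symm; have n43 := n34.symm; have n53 := n35.symm
  have hx0 : G.Adj x a.1 := a.2
  have hx1 : G.Adj x b.1 := b.2
  have hx2 : G.Adj x c.1 := c.2
  have hx3 : G.Adj x d.1 := d.2
  have hx4 : G.Adj x e.1 := e.2
  have hx5 : G.Adj x f.1 := f.2
  have h0x := hx0.symm; have h1x := hx1.symm; have h2x := hx2.symm
  have h3x := hx3.symm; have h4x := hx4.symm; have h5x := hx5.symm
  refine buildEmb threeK2Universal ![a.1, b.1, c.1, d.1, e.1, f.1, x] ?_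
  intro i j hij
  fin_cases i <;> fin_cases j <;>
    simp_all (config := { decide := true }) [threeK2Universal, graphOfEdges,
      SimpleGraph.fromRel_adj]

def build_oct {x : V} {a b c d e f : ↥(G.neighborSet x)}
    (h : octAt (G.induce (G.neighborSet x)) a b c d e f) : octahedronUniversal ↪g G := by
  obtain ⟨h01, h23, h45, n01, n23, n45, h02, h03, h12, h13, h04, h05, h14, h15,
    h24, h25, h34, h35⟩ := octAt_val h
  have h20 := h02.symm; have h30 := h03.symm; have h21 := h12.symm; have h31 := h13.symm
  have h40 := h04.symm; have h50 := h05.symm; have h41 := h14.symm; have h51 := h15.symm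
  have h42 := h24.symm; have h52 := h25.symm; have h43 := h34.symm; have h53 := h35.symm
  have h10 : ¬G.Adj b.1 a.1 := fun h' => h01 h'.symm
  have h32 : ¬G.Adj d.1 c.1 := fun h' => h23 h'.symm
  have h54 : ¬G.Adj f.1 e.1 := fun h' => h45 h'.symm
  have n10 := n01.symm; have n32 := n23.symm; have n54 := n45.symm
  have hx0 : G.Adj x a.1 := a.2
  have hx1 : G.Adj x b.1 := b.2
  have hx2 : G.Adj x c.1 := c.2
  have hx3 : G.Adj x d.1 := d.2
  have hx4 : G.Adj x e.1 := e.2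
  have hx5 : G.Adj x f.1 := f.2
  have h0x := hx0.symm; have h1x := hx1.symm; have h2x := hx2.symm
  have h3x := hx3.symm; have h4x := hx4.symm; have h5x := hx5.symm
  refine buildEmb octahedronUniversal ![a.1, b.1, c.1, d.1, e.1, f.1, x] ?_
  intro i j hij
  fin_cases i <;> fin_cases j <;>
    simp_all (config := { decide := true }) [octahedronUniversal, graphOfEdges,
      SimpleGraph.fromRel_adj]

end Embeddings

section Consume

open SimpleGraph

variable {V : Type*} {G : SimpleGraph V}

set_option maxHeartbeats 1000000

lemma consume_gem (hgood : Good G) : IsEmpty (gem ↪g G) := by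
  constructor
  intro e
  have m0 : e 0 ∈ G.neighborSet (e 4) := e.map_rel_iff.mpr (by decide : gem.Adj 4 0)
  have m1 : e 1 ∈ G.neighborSet (e 4) := e.map_rel_iff.mpr (by decide : gem.Adj 4 1)
  have m2 : e 2 ∈ G.neighborSet (e 4) := e.map_rel_iff.mpr (by decide : gem.Adj 4 2)
  have m3 : e 3 ∈ G.neighborSet (e 4) := e.map_rel_iff.mpr (by decide : gem.Adj 4 3)
  have cfg : p4At (G.induce (G.neighborSet (e 4))) ⟨e 0, m0⟩ ⟨e 1, m1⟩ ⟨e 2, m2⟩ ⟨e 3, m3⟩ :=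
    p4At_lift m0 m1 m2 m3
      ⟨e.map_rel_iff.mpr (by decide), e.map_rel_iff.mpr (by decide),
       e.map_rel_iff.mpr (by decide),
       fun h => (by decide : ¬gem.Adj 0 2) (e.map_rel_iff.mp h),
       fun h => (by decide : ¬gem.Adj 0 3) (e.map_rel_iff.mp h),
       fun h => (by decide : ¬gem.Adj 1 3) (e.map_rel_iff.mp h),
       e.injective.ne (by decide), e.injective.ne (by decide), e.injective.ne (by decide)⟩
  rcases hgood (e 4) with hemp | hrest
  · exact Set.notMem_empty _ (hemp ▸ m0)
  · exact bad_p4 cfg hrest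

lemma consume_c4k1 (hgood : Good G) : IsEmpty (c4K1Universal ↪g G) := by
  constructor
  intro e
  have m0 : e 0 ∈ G.neighborSet (e 5) := e.map_rel_iff.mpr (by decide : c4K1Universal.Adj 5 0)
  have m1 : e 1 ∈ G.neighborSet (e 5) := e.map_rel_iff.mpr (by decide : c4K1Universal.Adj 5 1)
  have m2 : e 2 ∈ G.neighborSet (e 5) := e.map_rel_iff.mpr (by decide : c4K1Universal.Adj 5 2)
  have m3 : e 3 ∈ G.neighborSet (e 5) := e.map_rel_iff.mpr (by decide : c4K1Universal.Adj 5 3)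
  have m4 : e 4 ∈ G.neighborSet (e 5) := e.map_rel_iff.mpr (by decide : c4K1Universal.Adj 5 4)
  have cfg : c4k1At (G.induce (G.neighborSet (e 5)))
      ⟨e 0, m0⟩ ⟨e 1, m1⟩ ⟨e 2, m2⟩ ⟨e 3, m3⟩ ⟨e 4, m4⟩ :=
    c4k1At_lift m0 m1 m2 m3 m4
      ⟨⟨e.map_rel_iff.mpr (by decide), e.map_rel_iff.mpr (by decide),
        e.map_rel_iff.mpr (by decide), e.map_rel_iff.mpr (by decide),
        fun h => (by decide : ¬c4K1Universal.Adj 0 2) (e.map_rel_iff.mp h),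
        fun h => (by decide : ¬c4K1Universal.Adj 1 3) (e.map_rel_iff.mp h),
        e.injective.ne (by decide), e.injective.ne (by decide)⟩,
       fun h => (by decide : ¬c4K1Universal.Adj 0 4) (e.map_rel_iff.mp h),
       fun h => (by decide : ¬c4K1Universal.Adj 1 4) (e.map_rel_iff.mp h),
       fun h => (by decide : ¬c4K1Universal.Adj 2 4) (e.map_rel_iff.mp h),
       fun h => (by decide : ¬c4K1Universal.Adj 3 4) (e.map_rel_iff.mp h),
       e.injective.ne (by decide), e.injective.ne (by decide),
       e.injective.ne (by decide), e.injective.ne (by decide)⟩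
  rcases hgood (e 5) with hemp | hrest
  · exact Set.notMem_empty _ (hemp ▸ m0)
  · exact bad_c4k1 cfg hrest

lemma consume_btf (hgood : Good G) : IsEmpty (butterflyUniversal ↪g G) := by
  constructor
  intro e
  have m0 : e 0 ∈ G.neighborSet (e 5) :=
    e.map_rel_iff.mpr (by decide : butterflyUniversal.Adj 5 0)
  have m1 : e 1 ∈ G.neighborSet (e 5) :=
    e.map_rel_iff.mpr (by decide : butterflyUniversal.Adj 5 1)
  have m2 : e 2 ∈ G.neighborSet (e 5) :=
    e.map_rel_iff.mpr (by decide : butterflyUniversal.Adj 5 2)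
  have m3 : e 3 ∈ G.neighborSet (e 5) :=
    e.map_rel_iff.mpr (by decide : butterflyUniversal.Adj 5 3)
  have m4 : e 4 ∈ G.neighborSet (e 5) :=
    e.map_rel_iff.mpr (by decide : butterflyUniversal.Adj 5 4)
  have cfg : btfAt (G.induce (G.neighborSet (e 5)))
      ⟨e 0, m0⟩ ⟨e 1, m1⟩ ⟨e 2, m2⟩ ⟨e 3, m3⟩ ⟨e 4, m4⟩ :=
    btfAt_lift m0 m1 m2 m3 m4
      ⟨e.map_rel_iff.mpr (by decide), e.map_rel_iff.mpr (by decide),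
       e.map_rel_iff.mpr (by decide), e.map_rel_iff.mpr (by decide),
       e.map_rel_iff.mpr (by decide), e.map_rel_iff.mpr (by decide),
       fun h => (by decide : ¬butterflyUniversal.Adj 0 3) (e.map_rel_iff.mp h),
       fun h => (by decide : ¬butterflyUniversal.Adj 0 4) (e.map_rel_iff.mp h),
       fun h => (by decide : ¬butterflyUniversal.Adj 1 3) (e.map_rel_iff.mp h),
       fun h => (by decide : ¬butterflyUniversal.Adj 1 4) (e.map_rel_iff.mp h),
       e.injective.ne (by decide), e.injective.ne (by decide),
       e.injective.ne (by decide), e.injective.ne (by decide)⟩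
  rcases hgood (e 5) with hemp | hrest
  · exact Set.notMem_empty _ (hemp ▸ m0)
  · exact bad_btf cfg hrest

lemma consume_3k2 (hgood : Good G) : IsEmpty (threeK2Universal ↪g G) := by
  constructor
  intro e
  have m0 : e 0 ∈ G.neighborSet (e 6) :=
    e.map_rel_iff.mpr (by decide : threeK2Universal.Adj 6 0)
  have m1 : e 1 ∈ G.neighborSet (e 6) :=
    e.map_rel_iff.mpr (by decide : threeK2Universal.Adj 6 1)
  have m2 : e 2 ∈ G.neighborSet (e 6) :=
    e.map_rel_iff.mpr (by decide : threeK2Universal.Adj 6 2)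
  have m3 : e 3 ∈ G.neighborSet (e 6) :=
    e.map_rel_iff.mpr (by decide : threeK2Universal.Adj 6 3)
  have m4 : e 4 ∈ G.neighborSet (e 6) :=
    e.map_rel_iff.mpr (by decide : threeK2Universal.Adj 6 4)
  have m5 : e 5 ∈ G.neighborSet (e 6) :=
    e.map_rel_iff.mpr (by decide : threeK2Universal.Adj 6 5)
  have cfg : k32At (G.induce (G.neighborSet (e 6)))
      ⟨e 0, m0⟩ ⟨e 1, m1⟩ ⟨e 2, m2⟩ ⟨e 3, m3⟩ ⟨e 4, m4⟩ ⟨e 5, m5⟩ :=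
    k32At_lift m0 m1 m2 m3 m4 m5
      ⟨⟨e.map_rel_iff.mpr (by decide), e.map_rel_iff.mpr (by decide),
        fun h => (by decide : ¬threeK2Universal.Adj 0 2) (e.map_rel_iff.mp h),
        fun h => (by decide : ¬threeK2Universal.Adj 0 3) (e.map_rel_iff.mp h),
        fun h => (by decide : ¬threeK2Universal.Adj 1 2) (e.map_rel_iff.mp h),
        fun h => (by decide : ¬threeK2Universal.Adj 1 3) (e.map_rel_iff.mp h),
        e.injective.ne (by decide), e.injective.ne (by decide),
        e.injective.ne (by decide), e.injective.ne (by decide)⟩,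
       ⟨e.map_rel_iff.mpr (by decide), e.map_rel_iff.mpr (by decide),
        fun h => (by decide : ¬threeK2Universal.Adj 0 4) (e.map_rel_iff.mp h),
        fun h => (by decide : ¬threeK2Universal.Adj 0 5) (e.map_rel_iff.mp h),
        fun h => (by decide : ¬threeK2Universal.Adj 1 4) (e.map_rel_iff.mp h),
        fun h => (by decide : ¬threeK2Universal.Adj 1 5) (e.map_rel_iff.mp h),
        e.injective.ne (by decide), e.injective.ne (by decide),
        e.injective.ne (by decide), e.injective.ne (by decide)⟩,
       ⟨e.map_rel_iff.mpr (by decide), e.map_rel_iff.mpr (by decide),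
        fun h => (by decide : ¬threeK2Universal.Adj 2 4) (e.map_rel_iff.mp h),
        fun h => (by decide : ¬threeK2Universal.Adj 2 5) (e.map_rel_iff.mp h),
        fun h => (by decide : ¬threeK2Universal.Adj 3 4) (e.map_rel_iff.mp h),
        fun h => (by decide : ¬threeK2Universal.Adj 3 5) (e.map_rel_iff.mp h),
        e.injective.ne (by decide), e.injective.ne (by decide),
        e.injective.ne (by decide), e.injective.ne (by decide)⟩⟩
  rcases hgood (e 6) with hemp | hrest
  · exact Set.notMem_empty _ (hemp ▸ m0)
  · exact bad_3k2 cfg hrest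

lemma consume_oct (hgood : Good G) : IsEmpty (octahedronUniversal ↪g G) := by
  constructor
  intro e
  have m0 : e 0 ∈ G.neighborSet (e 6) :=
    e.map_rel_iff.mpr (by decide : octahedronUniversal.Adj 6 0)
  have m1 : e 1 ∈ G.neighborSet (e 6) :=
    e.map_rel_iff.mpr (by decide : octahedronUniversal.Adj 6 1)
  have m2 : e 2 ∈ G.neighborSet (e 6) :=
    e.map_rel_iff.mpr (by decide : octahedronUniversal.Adj 6 2)
  have m3 : e 3 ∈ G.neighborSet (e 6) :=
    e.map_rel_iff.mpr (by decide : octahedronUniversal.Adj 6 3)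
  have m4 : e 4 ∈ G.neighborSet (e 6) :=
    e.map_rel_iff.mpr (by decide : octahedronUniversal.Adj 6 4)
  have m5 : e 5 ∈ G.neighborSet (e 6) :=
    e.map_rel_iff.mpr (by decide : octahedronUniversal.Adj 6 5)
  have cfg : octAt (G.induce (G.neighborSet (e 6)))
      ⟨e 0, m0⟩ ⟨e 1, m1⟩ ⟨e 2, m2⟩ ⟨e 3, m3⟩ ⟨e 4, m4⟩ ⟨e 5, m5⟩ :=
    octAt_lift m0 m1 m2 m3 m4 m5
      ⟨fun h => (by decide : ¬octahedronUniversal.Adj 0 1) (e.map_rel_iff.mp h),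
       fun h => (by decide : ¬octahedronUniversal.Adj 2 3) (e.map_rel_iff.mp h),
       fun h => (by decide : ¬octahedronUniversal.Adj 4 5) (e.map_rel_iff.mp h),
       e.injective.ne (by decide), e.injective.ne (by decide), e.injective.ne (by decide),
       e.map_rel_iff.mpr (by decide), e.map_rel_iff.mpr (by decide),
       e.map_rel_iff.mpr (by decide), e.map_rel_iff.mpr (by decide),
       e.map_rel_iff.mpr (by decide), e.map_rel_iff.mpr (by decide),
       e.map_rel_iff.mpr (by decide), e.map_rel_iff.mpr (by decide),
       e.map_rel_iff.mpr (by decide), e.map_rel_iff.mpr (by decide),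
       e.map_rel_iff.mpr (by decide), e.map_rel_iff.mpr (by decide)⟩
  rcases hgood (e 6) with hemp | hrest
  · exact Set.notMem_empty _ (hemp ▸ m0)
  · exact bad_oct cfg hrest

end Consume

/-- A graph is good iff it has no induced subgraph isomorphic to the gem, to `C₄ + K₁`
with a universal vertex added, to the butterfly with a universal vertex added, to `3K₂`
with a universal vertex added, or to the octahedron with a universal vertex added. -/
theorem good_iff_forbidden {V : Type*} [Fintype V] (G : SimpleGraph V) :
    Good G ↔
      (IsEmpty (gem ↪g G) ∧ IsEmpty (c4K1Universal ↪g G) ∧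
       IsEmpty (butterflyUniversal ↪g G) ∧ IsEmpty (threeK2Universal ↪g G) ∧
       IsEmpty (octahedronUniversal ↪g G)) := by
  constructor
  · intro hgood
    exact ⟨consume_gem hgood, consume_c4k1 hgood, consume_btf hgood, consume_3k2 hgood,
      consume_oct hgood⟩
  · rintro ⟨h1, h2, h3, h4, h5⟩ x
    have hfin : Finite ↥(G.neighborSet x) := Subtype.finite
    letI : Fintype ↥(G.neighborSet x) := Fintype.ofFinite _
    refine Or.inr ?_
    refine struct_of_free ?_ ?_ ?_ ?_ ?_
    · rintro ⟨a, b, c, d, hcfg⟩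
      exact h1.false (build_gem hcfg)
    · rintro ⟨a, b, c, d, e, hcfg⟩
      exact h2.false (build_c4k1 hcfg)
    · rintro ⟨a, b, v, c, d, hcfg⟩
      exact h3.false (build_btf hcfg)
    · rintro ⟨a, b, c, d, e, f, hcfg⟩
      exact h4.false (build_3k2 hcfg)
    · rintro ⟨a, b, c, d, e, f, hcfg⟩
      exact h5.false (build_oct hcfg)
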